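/- Let n, f, L, d be natural numbers with 0 ≤ f < n/2 and L, d ≥ 1. Let Δ_1, …, Δ_n ∈ ℝ^d, let B ⊆ {1,…,n} with |B| = n − f, and set Δ̄ := (1/|B|)·∑_{i∈B} Δ_i. Let layer : {1,…,d} → {1,…,L} assign each coordinate to a layer, for each client i let K_i ⊆ {1,…,d}, and for each layer l let S_l ⊆ {1,…,n} satisfy |S_l| ≥ n/2 − f. Define the aggregate F ∈ ℝ^d coordinatewise by F_j := (1/|S_{layer(j)}|)·∑_{i∈S_{layer(j)}} (Δ_i|_{K_i})_j. Assume there are reals c, b ∈ [0,1], ν̄, ζ̄, C_λ, C ≥ 0 and nonnegative reals b_1, …, b_L with ∑_{l=1}^L b_l ≤ b such that: (i) ‖(Δ_i − Δ̄)|_{K_i}‖² ≤ c·‖Δ_i − Δ̄‖² for every i; (ii) ‖Δ̄|_{K_i^c ∩ layer⁻¹(l)}‖² ≤ b_l·‖Δ̄‖² for every i and every layer l; (iii) (1/|B|)·∑_{i∈B} ‖Δ_i − Δ̄‖² ≤ 2ν̄ + ζ̄; (iv) ‖Δ_i‖² ≤ C_λ² for every i ∉ B; (v) ‖Δ_i‖²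 ≤ C² for every i ∈ B. Then ‖F − Δ̄‖² ≤ 2c·(1 + f/(n−2f))·(2ν̄ + ζ̄ + 2C_λ² + 2C²) + b·C². -/

import Mathlib

/-- The masked vector `x|_K ∈ ℝ^d`: keeps the coordinates of `x` in `K` and zeroes the rest. -/
noncomputable def mask {d : ℕ} (x : EuclideanSpace ℝ (Fin d)) (K : Finset (Fin d)) :
    EuclideanSpace ℝ (Fin d) :=
  WithLp.toLp 2 (fun j => if j ∈ K then x j else 0)

set_option maxHeartbeats 1000000 in
/-- Deterministic core of the paper's Lemma 1 (κ-robustness of LASA).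
With `n` clients of which at most `f < n/2` are malicious, benign set `B` of size `n − f`
with benign average `Δ̄`, a layer assignment `layer : {1,…,d} → {1,…,L}`, per-client
sparsification masks `K i`, per-layer selection sets `S l` of size at least `n/2 − f`,
and the layer-adaptive sparsified aggregate `F` (coordinatewise average over the layer's
selected set of the individually sparsified updates), under the bounded-sparsification
hypotheses (i)–(ii), the benign-divergence bound (iii), and the norm bounds (iv)–(v),
`‖F − Δ̄‖² ≤ 2c·(1 + f/(n−2f))·(2ν̄ + ζ̄ + 2C_λ² + 2C²) + b·C²`. -/
theorem stmt_7 (n f L d : ℕ) (hnf : 2 * f < n) (hL : 1 ≤ L) (hd : 1 ≤ d)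
    (Δ : Fin n → EuclideanSpace ℝ (Fin d))
    (B : Finset (Fin n)) (hB : B.card = n - f)
    (Δbar : EuclideanSpace ℝ (Fin d))
    (hΔbar : Δbar = (1 / (B.card : ℝ)) • ∑ i ∈ B, Δ i)
    (layer : Fin d → Fin L)
    (K : Fin n → Finset (Fin d))
    (S : Fin L → Finset (Fin n)) (hS : ∀ l, ((n : ℝ) / 2 - f) ≤ (S l).card)
    (F : EuclideanSpace ℝ (Fin d))
    (hF : ∀ j, F j = (1 / ((S (layer j)).card : ℝ)) *
      ∑ i ∈ S (layer j), mask (Δ i) (K i) j)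
    (c b : ℝ) (hc0 : 0 ≤ c) (hc1 : c ≤ 1) (hb0 : 0 ≤ b) (hb1 : b ≤ 1)
    (ν ζ Clam C : ℝ) (hν : 0 ≤ ν) (hζ : 0 ≤ ζ) (hClam : 0 ≤ Clam) (hC : 0 ≤ C)
    (bl : Fin L → ℝ) (hbl0 : ∀ l, 0 ≤ bl l) (hblsum : ∑ l, bl l ≤ b)
    (hi : ∀ i, ‖mask (Δ i - Δbar) (K i)‖ ^ 2 ≤ c * ‖Δ i - Δbar‖ ^ 2)
    (hii : ∀ (i : Fin n) (l : Fin L),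
      ‖mask Δbar ((K i)ᶜ ∩ Finset.univ.filter (fun j => layer j = l))‖ ^ 2 ≤
        bl l * ‖Δbar‖ ^ 2)
    (hiii : (1 / (B.card : ℝ)) * ∑ i ∈ B, ‖Δ i - Δbar‖ ^ 2 ≤ 2 * ν + ζ)
    (hiv : ∀ i ∉ B, ‖Δ i‖ ^ 2 ≤ Clam ^ 2)
    (hv : ∀ i ∈ B, ‖Δ i‖ ^ 2 ≤ C ^ 2) :
    ‖F - Δbar‖ ^ 2 ≤
      2 * c * (1 + (f : ℝ) / ((n : ℝ) - 2 * f)) * (2 * ν + ζ + 2 * Clam ^ 2 + 2 * C ^ 2) +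
      b * C ^ 2 := by
  classical
  -- basic numeric facts
  have hnf' : (2 * f : ℝ) < n := by exact_mod_cast hnf
  have hD : (0:ℝ) < (n:ℝ) - 2 * f := by linarith
  set r : ℝ := 2 / ((n:ℝ) - 2 * f) with hr
  have hrpos : 0 < r := by positivity
  have hfn : f ≤ n := by omega
  have hBcard : (B.card : ℝ) = (n:ℝ) - f := by
    rw [hB]; push_cast [hfn]; ring
  have hBpos : (0:ℝ) < (B.card : ℝ) := by rw [hBcard]; linarith
  have hScard : ∀ l, (0:ℝ) < ((S l).card : ℝ) := by
    intro l; have := hS l; linarith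
  have hSr : ∀ l, 1 / ((S l).card : ℝ) ≤ r := by
    intro l
    rw [hr, div_le_div_iff₀ (hScard l) hD]
    have := hS l; linarith
  -- norm squared as sum of coordinate squares
  have nsq : ∀ x : EuclideanSpace ℝ (Fin d), ‖x‖ ^ 2 = ∑ j, (x j) ^ 2 := by
    intro x
    rw [EuclideanSpace.norm_eq, Real.sq_sqrt (by positivity)]
    simp [sq_abs]
  have masknsq : ∀ (x : EuclideanSpace ℝ (Fin d)) (T : Finset (Fin d)),
      ‖mask x T‖ ^ 2 = ∑ j ∈ T, (x j) ^ 2 := by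
    intro x T
    rw [nsq]
    have e : ∀ j, (mask x T j) ^ 2 = if j ∈ T then (x j) ^ 2 else 0 := fun j => by
      by_cases h : j ∈ T <;> simp [mask, h]
    simp_rw [e]
    rw [Finset.sum_ite_mem, Finset.univ_inter]
  -- bound on the benign average
  have hΔbarle : ‖Δbar‖ ≤ C := by
    have hCi : ∀ i ∈ B, ‖Δ i‖ ≤ C := fun i hi =>
      le_of_pow_le_pow_left₀ two_ne_zero hC (hv i hi)
    have h1 : ‖∑ i ∈ B, Δ i‖ ≤ (B.card : ℝ) * C := by
      calc ‖∑ i ∈ B, Δ i‖ ≤ ∑ i ∈ B, ‖Δ i‖ := norm_sum_le _ _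
        _ ≤ ∑ _i ∈ B, C := Finset.sum_le_sum hCi
        _ = (B.card : ℝ) * C := by rw [Finset.sum_const, nsmul_eq_mul]
    rw [hΔbar, norm_smul, Real.norm_eq_abs, abs_of_pos (one_div_pos.mpr hBpos)]
    calc 1 / (B.card:ℝ) * ‖∑ i ∈ B, Δ i‖ ≤ 1/(B.card:ℝ) * ((B.card:ℝ)*C) :=
          mul_le_mul_of_nonneg_left h1 (le_of_lt (one_div_pos.mpr hBpos))
      _ = C := by field_simp
  have hΔbarsq : ‖Δbar‖ ^ 2 ≤ C ^ 2 := pow_le_pow_left₀ (norm_nonneg _) hΔbarle 2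
  -- pointwise decomposition with disjoint supports
  have key : ∀ (i : Fin n) (j : Fin d),
      (mask (Δ i) (K i) j - Δbar j) ^ 2
        = (mask (Δ i - Δbar) (K i) j) ^ 2 + (mask Δbar ((K i)ᶜ) j) ^ 2 := by
    intro i j
    by_cases h : j ∈ K i
    · simp [mask, h]
    · simp [mask, h]
  -- per-coordinate Jensen bound
  have hj : ∀ j : Fin d, (F j - Δbar j) ^ 2 ≤
      (1 / ((S (layer j)).card : ℝ)) *
        ∑ i ∈ S (layer j), (mask (Δ i) (K i) j - Δbar j) ^ 2 := by
    intro j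
    have hm : (0:ℝ) < ((S (layer j)).card : ℝ) := hScard _
    have hFj : F j - Δbar j = (1 / ((S (layer j)).card : ℝ)) *
        ∑ i ∈ S (layer j), (mask (Δ i) (K i) j - Δbar j) := by
      rw [hF j, Finset.sum_sub_distrib, Finset.sum_const, nsmul_eq_mul]
      field_simp
    have h2 : (∑ i ∈ S (layer j), (mask (Δ i) (K i) j - Δbar j)) ^ 2 ≤
        ((S (layer j)).card : ℝ) *
          ∑ i ∈ S (layer j), (mask (Δ i) (K i) j - Δbar j) ^ 2 := by
      exact_mod_cast sq_sum_le_card_mul_sum_sq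
        (f := fun i => mask (Δ i) (K i) j - Δbar j)
    rw [hFj, mul_pow]
    calc (1 / ((S (layer j)).card : ℝ)) ^ 2 *
          (∑ i ∈ S (layer j), (mask (Δ i) (K i) j - Δbar j)) ^ 2
        ≤ (1 / ((S (layer j)).card : ℝ)) ^ 2 *
          (((S (layer j)).card : ℝ) *
            ∑ i ∈ S (layer j), (mask (Δ i) (K i) j - Δbar j) ^ 2) :=
          mul_le_mul_of_nonneg_left h2 (by positivity)
      _ = (1 / ((S (layer j)).card : ℝ)) *
            ∑ i ∈ S (layer j), (mask (Δ i) (K i) j - Δbar j) ^ 2 := by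
          field_simp
  -- the two pieces
  set T1 : ℝ := ∑ j : Fin d, (1 / ((S (layer j)).card : ℝ)) *
      ∑ i ∈ S (layer j), (mask (Δ i - Δbar) (K i) j) ^ 2 with hT1
  set T2 : ℝ := ∑ j : Fin d, (1 / ((S (layer j)).card : ℝ)) *
      ∑ i ∈ S (layer j), (mask Δbar ((K i)ᶜ) j) ^ 2 with hT2
  have main : ‖F - Δbar‖ ^ 2 ≤ T1 + T2 := by
    have e1 : ‖F - Δbar‖ ^ 2 = ∑ j : Fin d, (F j - Δbar j) ^ 2 := by
      rw [nsq]
      rfl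
    calc ‖F - Δbar‖ ^ 2 = ∑ j : Fin d, (F j - Δbar j) ^ 2 := e1
      _ ≤ ∑ j : Fin d, (1 / ((S (layer j)).card : ℝ)) *
            ∑ i ∈ S (layer j), (mask (Δ i) (K i) j - Δbar j) ^ 2 :=
          Finset.sum_le_sum fun j _ => hj j
      _ = T1 + T2 := by
          rw [hT1, hT2, ← Finset.sum_add_distrib]
          refine Finset.sum_congr rfl fun j _ => ?_
          rw [← mul_add, ← Finset.sum_add_distrib]
          congr 1
          exact Finset.sum_congr rfl fun i _ => key i j
  -- bound T1
  have hsumB : ∑ i ∈ B, ‖Δ i - Δbar‖ ^ 2 ≤ ((n:ℝ) - f) * (2 * ν + ζ) := by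
    have := mul_le_mul_of_nonneg_left hiii (le_of_lt hBpos)
    rw [← mul_assoc, mul_one_div, div_self (ne_of_gt hBpos), one_mul] at this
    rw [← hBcard]
    exact this
  have hBc : (Bᶜ.card : ℝ) = (f:ℝ) := by
    have : Bᶜ.card = n - (n - f) := by
      rw [Finset.card_compl, hB, Fintype.card_fin]
    rw [this]
    have : n - (n - f) = f := by omega
    rw [this]
  have hsumBc : ∑ i ∈ Bᶜ, ‖Δ i - Δbar‖ ^ 2 ≤ (f:ℝ) * (2 * Clam ^ 2 + 2 * C ^ 2) := by
    calc ∑ i ∈ Bᶜ, ‖Δ i - Δbar‖ ^ 2 ≤ ∑ _i ∈ Bᶜ, (2 * Clam ^ 2 + 2 * C ^ 2) := by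
          refine Finset.sum_le_sum fun i hi => ?_
          have h1 : ‖Δ i - Δbar‖ ≤ ‖Δ i‖ + ‖Δbar‖ := norm_sub_le _ _
          have h2 : ‖Δ i‖ ^ 2 ≤ Clam ^ 2 := hiv i (Finset.mem_compl.mp hi)
          nlinarith [pow_le_pow_left₀ (norm_nonneg (Δ i - Δbar)) h1 2, sq_nonneg (‖Δ i‖ - ‖Δbar‖), h2, hΔbarsq]
      _ = (f:ℝ) * (2 * Clam ^ 2 + 2 * C ^ 2) := by
          rw [Finset.sum_const, nsmul_eq_mul, hBc]
  have hsumAll : ∑ i : Fin n, ‖Δ i - Δbar‖ ^ 2 ≤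
      ((n:ℝ) - f) * (2 * ν + ζ) + (f:ℝ) * (2 * Clam ^ 2 + 2 * C ^ 2) := by
    rw [← Finset.sum_add_sum_compl B]
    exact add_le_add hsumB hsumBc
  have hT1b : T1 ≤ r * c *
      (((n:ℝ) - f) * (2 * ν + ζ) + (f:ℝ) * (2 * Clam ^ 2 + 2 * C ^ 2)) := by
    have step1 : T1 ≤ ∑ j : Fin d, r * ∑ i : Fin n, (mask (Δ i - Δbar) (K i) j) ^ 2 := by
      rw [hT1]
      refine Finset.sum_le_sum fun j _ => ?_
      refine mul_le_mul (hSr _) ?_ ?_ (le_of_lt hrpos)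
      · exact Finset.sum_le_sum_of_subset_of_nonneg (Finset.subset_univ _)
          (fun i _ _ => sq_nonneg _)
      · exact Finset.sum_nonneg fun i _ => sq_nonneg _
    have step2 : ∑ j : Fin d, r * ∑ i : Fin n, (mask (Δ i - Δbar) (K i) j) ^ 2
        = r * ∑ i : Fin n, ‖mask (Δ i - Δbar) (K i)‖ ^ 2 := by
      rw [← Finset.mul_sum, Finset.sum_comm]
      congr 1
      exact Finset.sum_congr rfl fun i _ => (nsq _).symm
    have step3 : r * ∑ i : Fin n, ‖mask (Δ i - Δbar) (K i)‖ ^ 2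
        ≤ r * (c * ∑ i : Fin n, ‖Δ i - Δbar‖ ^ 2) := by
      refine mul_le_mul_of_nonneg_left ?_ (le_of_lt hrpos)
      rw [Finset.mul_sum]
      exact Finset.sum_le_sum fun i _ => hi i
    have step4 : r * (c * ∑ i : Fin n, ‖Δ i - Δbar‖ ^ 2) ≤ r * c *
        (((n:ℝ) - f) * (2 * ν + ζ) + (f:ℝ) * (2 * Clam ^ 2 + 2 * C ^ 2)) := by
      rw [← mul_assoc]
      exact mul_le_mul_of_nonneg_left hsumAll (by positivity)
    calc T1 ≤ ∑ j : Fin d, r * ∑ i : Fin n, (mask (Δ i - Δbar) (K i) j) ^ 2 := step1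
      _ = r * ∑ i : Fin n, ‖mask (Δ i - Δbar) (K i)‖ ^ 2 := step2
      _ ≤ r * (c * ∑ i : Fin n, ‖Δ i - Δbar‖ ^ 2) := step3
      _ ≤ _ := step4
  -- bound T2 via layers
  have hT2b : T2 ≤ b * C ^ 2 := by
    have regroup : T2 = ∑ l : Fin L, ∑ j ∈ Finset.univ.filter (fun j => layer j = l),
        (1 / ((S (layer j)).card : ℝ)) *
          ∑ i ∈ S (layer j), (mask Δbar ((K i)ᶜ) j) ^ 2 := by
      rw [hT2, Finset.sum_fiberwise]
    have perlayer : ∀ l : Fin L,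
        ∑ j ∈ Finset.univ.filter (fun j => layer j = l),
          (1 / ((S (layer j)).card : ℝ)) *
            ∑ i ∈ S (layer j), (mask Δbar ((K i)ᶜ) j) ^ 2 ≤ bl l * ‖Δbar‖ ^ 2 := by
      intro l
      have e : ∑ j ∈ Finset.univ.filter (fun j => layer j = l),
          (1 / ((S (layer j)).card : ℝ)) *
            ∑ i ∈ S (layer j), (mask Δbar ((K i)ᶜ) j) ^ 2
          = (1 / ((S l).card : ℝ)) * ∑ i ∈ S l,
            ∑ j ∈ Finset.univ.filter (fun j => layer j = l), (mask Δbar ((K i)ᶜ) j) ^ 2 := by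
        calc ∑ j ∈ Finset.univ.filter (fun j => layer j = l),
              (1 / ((S (layer j)).card : ℝ)) *
                ∑ i ∈ S (layer j), (mask Δbar ((K i)ᶜ) j) ^ 2
            = ∑ j ∈ Finset.univ.filter (fun j => layer j = l),
              (1 / ((S l).card : ℝ)) * ∑ i ∈ S l, (mask Δbar ((K i)ᶜ) j) ^ 2 := by
              refine Finset.sum_congr rfl fun j hj' => ?_
              have hl : layer j = l := (Finset.mem_filter.mp hj').2
              rw [hl]
          _ = (1 / ((S l).card : ℝ)) * ∑ j ∈ Finset.univ.filter (fun j => layer j = l),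
              ∑ i ∈ S l, (mask Δbar ((K i)ᶜ) j) ^ 2 := by rw [Finset.mul_sum]
          _ = (1 / ((S l).card : ℝ)) * ∑ i ∈ S l,
              ∑ j ∈ Finset.univ.filter (fun j => layer j = l),
                (mask Δbar ((K i)ᶜ) j) ^ 2 := by rw [Finset.sum_comm]
      rw [e]
      have inner : ∀ i ∈ S l, ∑ j ∈ Finset.univ.filter (fun j => layer j = l),
          (mask Δbar ((K i)ᶜ) j) ^ 2 ≤ bl l * ‖Δbar‖ ^ 2 := by
        intro i _
        have e2 : ∑ j ∈ Finset.univ.filter (fun j => layer j = l),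
            (mask Δbar ((K i)ᶜ) j) ^ 2
            = ‖mask Δbar ((K i)ᶜ ∩ Finset.univ.filter (fun j => layer j = l))‖ ^ 2 := by
          rw [masknsq]
          have e3 : ∀ j, (mask Δbar ((K i)ᶜ) j) ^ 2
              = if j ∈ (K i)ᶜ then (Δbar j) ^ 2 else 0 := fun j => by
            by_cases h : j ∈ (K i)ᶜ <;> simp only [Finset.mem_compl, not_not] at h <;> simp [mask, h]
          simp_rw [e3]
          rw [Finset.sum_ite_mem, Finset.inter_comm]
        rw [e2]
        exact hii i l
      calc (1 / ((S l).card : ℝ)) * ∑ i ∈ S l,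
            ∑ j ∈ Finset.univ.filter (fun j => layer j = l), (mask Δbar ((K i)ᶜ) j) ^ 2
          ≤ (1 / ((S l).card : ℝ)) * ∑ _i ∈ S l, bl l * ‖Δbar‖ ^ 2 := by
            refine mul_le_mul_of_nonneg_left (Finset.sum_le_sum inner) ?_
            positivity
        _ = bl l * ‖Δbar‖ ^ 2 := by
            rw [Finset.sum_const, nsmul_eq_mul, one_div,
              inv_mul_cancel_left₀ (ne_of_gt (hScard l))]
      
    calc T2 ≤ ∑ l : Fin L, bl l * ‖Δbar‖ ^ 2 := by
          rw [regroup]; exact Finset.sum_le_sum fun l _ => perlayer l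
      _ = (∑ l : Fin L, bl l) * ‖Δbar‖ ^ 2 := by rw [Finset.sum_mul]
      _ ≤ b * C ^ 2 := by
          refine mul_le_mul hblsum hΔbarsq (sq_nonneg _) hb0
  -- final arithmetic
  have hfrac : 1 + (f:ℝ) / ((n:ℝ) - 2 * f) = ((n:ℝ) - f) / ((n:ℝ) - 2 * f) := by
    rw [eq_div_iff hD.ne', add_mul, div_mul_cancel₀ _ hD.ne']; ring
  have final : r * c *
      (((n:ℝ) - f) * (2 * ν + ζ) + (f:ℝ) * (2 * Clam ^ 2 + 2 * C ^ 2))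
      ≤ 2 * c * (1 + (f:ℝ) / ((n:ℝ) - 2 * f)) *
        (2 * ν + ζ + 2 * Clam ^ 2 + 2 * C ^ 2) := by
    have key2 : 2 * c * (((n:ℝ) - f) * (2 * ν + ζ) + (f:ℝ) * (2 * Clam ^ 2 + 2 * C ^ 2))
        ≤ 2 * c * (((n:ℝ) - f) * (2 * ν + ζ + 2 * Clam ^ 2 + 2 * C ^ 2)) := by
      nlinarith [mul_nonneg (mul_nonneg hc0 (le_of_lt hD))
        (by positivity : (0:ℝ) ≤ 2 * Clam ^ 2 + 2 * C ^ 2)]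
    calc r * c * (((n:ℝ) - f) * (2 * ν + ζ) + (f:ℝ) * (2 * Clam ^ 2 + 2 * C ^ 2))
        = (2 * c * (((n:ℝ) - f) * (2 * ν + ζ) + (f:ℝ) * (2 * Clam ^ 2 + 2 * C ^ 2)))
            / ((n:ℝ) - 2 * f) := by rw [hr]; ring
      _ ≤ (2 * c * (((n:ℝ) - f) * (2 * ν + ζ + 2 * Clam ^ 2 + 2 * C ^ 2)))
            / ((n:ℝ) - 2 * f) := by gcongr
      _ = 2 * c * (((n:ℝ) - f) / ((n:ℝ) - 2 * f))
            * (2 * ν + ζ + 2 * Clam ^ 2 + 2 * C ^ 2) := by ring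
      _ = 2 * c * (1 + (f:ℝ) / ((n:ℝ) - 2 * f))
            * (2 * ν + ζ + 2 * Clam ^ 2 + 2 * C ^ 2) := by rw [hfrac]
  calc ‖F - Δbar‖ ^ 2 ≤ T1 + T2 := main
    _ ≤ r * c * (((n:ℝ) - f) * (2 * ν + ζ) + (f:ℝ) * (2 * Clam ^ 2 + 2 * C ^ 2))
        + b * C ^ 2 := add_le_add hT1b hT2b
    _ ≤ _ := by linarith [final]
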